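/- Let x be the n×n traceless matrix with diagonal entries x_{ii} = p_i (where Σ p_i = 0) and off-diagonal entries x_{ij} = (μ'_{ij} + (h_j/h_i) μ_{ij})/((h_j/h_i) - (h_i/h_j)) for i ≠ j, where h_1,…,h_n are nonzero scalars with h_i² ≠ h_j² for i ≠ j, and μ_{ij}, μ'_{ij} are scalars satisfying μ_{ji} = -μ_{ij} and μ'_{ji} = -μ'_{ij}. Then (1/2) tr(x²) = (1/2) Σ_i p_i² + Σ_{i<j} ((h_i/h_j) μ_{ij} + μ'_{ij})((h_j/h_i) μ_{ij} + μ'_{ij}) / ((h_i/h_j) - (h_j/h_i))². -/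

import Mathlib

open Finset in
/-- the quadratic spin Calogero-Moser Hamiltonian
(1/2)tr(x²) for the Chevalley-involution Lax matrix of SL_n. -/
theorem stmt_3 {n : ℕ} (p h : Fin n → ℂ) (μ μ' : Fin n → Fin n → ℂ)
    (hp : ∑ i, p i = 0)
    (hh : ∀ i, h i ≠ 0)
    (hh2 : ∀ i j, i ≠ j → h i ^ 2 ≠ h j ^ 2)
    (hμ : ∀ i j, μ j i = -μ i j) (hμ' : ∀ i j, μ' j i = -μ' i j)
    (x : Matrix (Fin n) (Fin n) ℂ)
    (hxd : ∀ i, x i i = p i)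
    (hxo : ∀ i j, i ≠ j →
      x i j = (μ' i j + (h j / h i) * μ i j) / ((h j / h i) - (h i / h j))) :
    (1 / 2 : ℂ) * (x * x).trace =
      (1 / 2 : ℂ) * ∑ i, (p i) ^ 2 +
        ∑ i, ∑ j, (if i < j then
          ((h i / h j) * μ i j + μ' i j) * ((h j / h i) * μ i j + μ' i j) /
            ((h i / h j) - (h j / h i)) ^ 2 else 0) := by
  set t : Fin n → Fin n → ℂ := fun i j =>
    ((h i / h j) * μ i j + μ' i j) * ((h j / h i) * μ i j + μ' i j) /
      ((h i / h j) - (h j / h i)) ^ 2 with ht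
  have tsymm : ∀ i j, t j i = t i j := by
    intro i j
    simp only [ht]
    rw [hμ i j, hμ' i j,
      show (h j / h i - h i / h j) ^ 2 = ((h i / h j) - (h j / h i)) ^ 2 by ring]
    congr 1
    ring
  have key : ∀ i j, x i j * x j i = if i = j then p i ^ 2 else t i j := by
    intro i j
    by_cases hij : i = j
    · subst hij; simp [hxd, sq]
    · have d1 : h j / h i - h i / h j ≠ 0 := by
        rw [div_sub_div _ _ (hh i) (hh j)]
        apply div_ne_zero
        · intro hc
          apply hh2 i j hij
          rw [sq, sq]
          linear_combination -hc
        · exact mul_ne_zero (hh i) (hh j)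
      have d2 : h i / h j - h j / h i ≠ 0 := by
        intro hc; apply d1; linear_combination -hc
      rw [hxo i j hij, hxo j i (Ne.symm hij), hμ i j, hμ' i j]
      simp only [if_neg hij, ht]
      rw [div_mul_div_comm, div_eq_div_iff (mul_ne_zero d1 d2) (pow_ne_zero 2 d2)]
      ring
  have htrace : (x * x).trace = ∑ i, ∑ j, x i j * x j i := by
    simp [Matrix.trace, Matrix.mul_apply, Matrix.diag]
  rw [htrace]
  have hsplit : ∀ i j : Fin n, (if i = j then p i ^ 2 else t i j)
      = (if i = j then p i ^ 2 else 0) + (if i < j then t i j else 0)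
        + (if j < i then t i j else 0) := by
    intro i j
    rcases lt_trichotomy i j with hlt | heq | hgt
    · simp [hlt, hlt.ne, not_lt_of_gt hlt]
    · simp [heq]
    · simp [hgt, hgt.ne', not_lt_of_gt hgt]
  have : ∑ i, ∑ j, x i j * x j i
      = ∑ i, p i ^ 2 + ∑ i, ∑ j, (if i < j then t i j else 0)
        + ∑ i, ∑ j, (if j < i then t i j else 0) := by
    simp only [key, hsplit, Finset.sum_add_distrib]
    congr 1
    congr 1
    simp
  rw [this]
  have hswap : ∑ i, ∑ j, (if j < i then t i j else 0)
      = ∑ i, ∑ j, (if i < j then t i j else 0) := by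
    rw [Finset.sum_comm]
    exact Finset.sum_congr rfl fun i _ => Finset.sum_congr rfl fun j _ => by
      rw [tsymm]
  rw [hswap]
  ring
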